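/- Let μ : {1,…,n} → ℝ with μ_k ≥ 0, and let D = (d_{kℓ}) ∈ M_n(ℍ) with quaternionic norm |d_{kℓ}| ≤ 1 for all k, ℓ. Define A ∈ M_n(ℍ) by a_{kℓ} = μ_k d_{kℓ}. Then for every 0 ≤ k ≤ 2n, the absolute value of the coefficient of z^k in the polynomial z ↦ det(I_{2n} + z·χ_A) is at most 2^k · k^{k/2} times the coefficient of z^k in the real polynomial ∏_{i=1}^n (1 + μ_i z)² (with the convention 0^0 = 1). -/

import Mathlib

open Matrix Polynomial

/-- The first complex component of a quaternion `q = α + β j`:  `α = re + imI * i`. -/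
noncomputable def qC1 (q : Quaternion ℝ) : ℂ := ⟨q.re, q.imI⟩

/-- The second complex component of a quaternion `q = α + β j`:  `β = imJ + imK * i`. -/
noncomputable def qC2 (q : Quaternion ℝ) : ℂ := ⟨q.imJ, q.imK⟩

/-- The companion matrix `χ_A = [[A₁, A₂], [-conj A₂, conj A₁]]` of a quaternionic matrix
`A = A₁ + A₂ j`. -/
noncomputable def companion {n : ℕ} (A : Matrix (Fin n) (Fin n) (Quaternion ℝ)) :
    Matrix (Fin n ⊕ Fin n) (Fin n ⊕ Fin n) ℂ :=
  Matrix.fromBlocks (A.map qC1) (A.map qC2)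
    (-(A.map fun q => (starRingEnd ℂ) (qC2 q))) (A.map fun q => (starRingEnd ℂ) (qC1 q))

/-- `lam` is a family of standard eigenvalues of the quaternionic matrix `A`: each has
nonnegative imaginary part and the characteristic polynomial of `χ_A` is
`∏ k, (X - λ k) (X - conj (λ k))`. -/
noncomputable def IsStdEigenvalues {n : ℕ} (A : Matrix (Fin n) (Fin n) (Quaternion ℝ))
    (lam : Fin n → ℂ) : Prop :=
  (∀ k, 0 ≤ (lam k).im) ∧
    (companion A).charpoly =
      ∏ k, ((X - C (lam k)) * (X - C ((starRingEnd ℂ) (lam k))))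

/-- The polynomial `z ↦ det (I + z M)` of a complex square matrix `M`. -/
noncomputable def detPolyAdd {m : Type*} [Fintype m] [DecidableEq m] (M : Matrix m m ℂ) :
    Polynomial ℂ :=
  Matrix.det ((1 : Matrix m m (Polynomial ℂ)) + (X : Polynomial ℂ) • M.map C)

open Finset
open scoped ComplexOrder

lemma detExpand {R : Type*} [CommRing R] {m : Type*} [Fintype m] [DecidableEq m]
    (B : Matrix m m R) :
    Matrix.det ((1 : Matrix m m R[X]) + (X : R[X]) • B.map C) =
      ∑ s : Finset m, (X : R[X]) ^ s.card * C (Matrix.det (Matrix.of (s.piecewise B (1 : Matrix m m R)))) := by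
  have h1 : ((1 : Matrix m m R[X]) + (X : R[X]) • B.map C) =
      ((fun i => (X : R[X]) • (B.map C) i) + fun i => (1 : Matrix m m R[X]) i) := by
    funext i j
    simp [Matrix.add_apply, Matrix.smul_apply, add_comm, Pi.add_apply]
  have hdet : Matrix.det ((1 : Matrix m m R[X]) + (X : R[X]) • B.map C) =
      (Matrix.detRowAlternating (R := R[X]) (n := m)).toMultilinearMap
        ((fun i => (X : R[X]) • (B.map C) i) + fun i => (1 : Matrix m m R[X]) i) := by
    rw [← h1]; rfl
  rw [hdet, MultilinearMap.map_add_univ]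
  refine Finset.sum_congr rfl fun s _ => ?_
  have h2 : s.piecewise (fun i => (X : R[X]) • (B.map C) i) (fun i => (1 : Matrix m m R[X]) i) =
      s.piecewise (fun i => (X : R[X]) • (s.piecewise (B.map C) (1 : Matrix m m R[X])) i)
        (s.piecewise (B.map C) (1 : Matrix m m R[X])) := by
    funext i
    by_cases hi : i ∈ s
    · simp [Finset.piecewise, hi]
    · simp [Finset.piecewise, hi]
  rw [h2, MultilinearMap.map_piecewise_smul]
  have h3 : s.piecewise (B.map C) (1 : Matrix m m R[X])
      = (Matrix.of (s.piecewise B (1 : Matrix m m R))).map C := by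
    funext i j
    by_cases hi : i ∈ s
    · simp [Finset.piecewise, hi, Matrix.map_apply]
    · simp only [Finset.piecewise, hi, ↓reduceIte, Matrix.map_apply, Matrix.of_apply,
        Matrix.one_apply]
      split <;> simp
  rw [h3, Finset.prod_const, smul_eq_mul]
  congr 1
  have h4 : ((Matrix.of (s.piecewise B (1 : Matrix m m R))).map (C : R → R[X])).det
      = C ((Matrix.of (s.piecewise B (1 : Matrix m m R))).det) := by
    simpa [RingHom.mapMatrix_apply] using
      (RingHom.map_det (C : R →+* R[X]) (Matrix.of (s.piecewise B (1 : Matrix m m R)))).symm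
  have h5 : (Matrix.detRowAlternating (R := R[X]) (n := m)).toMultilinearMap
      ((Matrix.of (s.piecewise B (1 : Matrix m m R))).map C)
      = Matrix.det ((Matrix.of (s.piecewise B (1 : Matrix m m R))).map C) := rfl
  exact h5.trans h4

lemma amgm {ι : Type*} [Fintype ι] (lam : ι → ℝ) (h0 : ∀ i, 0 ≤ lam i)
    (hk : Fintype.card ι ≠ 0) :
    ∏ i, lam i ≤ ((∑ i, lam i) / (Fintype.card ι : ℝ)) ^ (Fintype.card ι) := by
  set k := Fintype.card ι with hkdef
  have hkR : (k : ℝ) ≠ 0 := Nat.cast_ne_zero.mpr hk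
  have hw := Real.geom_mean_le_arith_mean_weighted Finset.univ (fun _ => 1/(k:ℝ)) lam
    (fun i _ => by positivity)
    (by simp only [Finset.sum_const, Finset.card_univ, ← hkdef, nsmul_eq_mul]
        field_simp)
    (fun i _ => h0 i)
  calc ∏ i, lam i = (∏ i, lam i ^ ((1:ℝ)/(k:ℝ))) ^ k := by
        rw [← Finset.prod_pow]
        refine Finset.prod_congr rfl fun i _ => ?_
        rw [← Real.rpow_natCast (lam i ^ ((1:ℝ)/(k:ℝ))) k, ← Real.rpow_mul (h0 i),
          one_div, inv_mul_cancel₀ hkR, Real.rpow_one]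
    _ ≤ (∑ i, 1/(k:ℝ) * lam i) ^ k := by
        refine pow_le_pow_left₀ (Finset.prod_nonneg fun i _ => Real.rpow_nonneg (h0 i) _) hw k
    _ = ((∑ i, lam i) / (k:ℝ)) ^ k := by
        rw [← Finset.mul_sum]; ring_nf

lemma hadamard_one {ι : Type*} [Fintype ι] [DecidableEq ι] (M : Matrix ι ι ℂ)
    (hM : ∀ i j, ‖M i j‖ ≤ 1) :
    ‖M.det‖ ≤ (Fintype.card ι : ℝ) ^ ((Fintype.card ι : ℝ) / 2) := by
  set k := Fintype.card ι with hkdef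
  rcases Nat.eq_zero_or_pos k with hk | hk
  · have : IsEmpty ι := Fintype.card_eq_zero_iff.mp hk
    rw [Matrix.det_isEmpty]
    simp [hk]
  have hkR : (0:ℝ) < (k : ℝ) := by exact_mod_cast hk
  set G := Mᴴ * M with hGdef
  have hG : G.PosSemidef := Matrix.posSemidef_conjTranspose_mul_self M
  have hH : G.IsHermitian := hG.1
  set lam := hH.eigenvalues with hlam
  have hl0 : ∀ i, 0 ≤ lam i := hG.eigenvalues_nonneg
  -- trace of G equals sum of eigenvalues
  have htrace : G.trace = ∑ i, (lam i : ℂ) := by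
    conv_lhs => rw [hH.spectral_theorem, Unitary.conjStarAlgAut_apply]
    rw [Matrix.trace_mul_cycle]
    rw [show (star (hH.eigenvectorUnitary : Matrix ι ι ℂ)) * (hH.eigenvectorUnitary : Matrix ι ι ℂ) = 1 from
      (Unitary.mem_iff.mp (hH.eigenvectorUnitary).2).1]
    rw [one_mul, Matrix.trace_diagonal]
    rfl
  -- trace of G as sum of normSq
  have htrace2 : G.trace = ((∑ i, ∑ j, Complex.normSq (M j i) : ℝ) : ℂ) := by
    rw [Matrix.trace]
    push_cast
    refine Finset.sum_congr rfl fun i _ => ?_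
    rw [Matrix.diag_apply, hGdef, Matrix.mul_apply]
    refine Finset.sum_congr rfl fun j _ => ?_
    rw [Matrix.conjTranspose_apply, Complex.star_def]
    exact (Complex.normSq_eq_conj_mul_self).symm
  have hsumlam : ∑ i, lam i = ∑ i, ∑ j, Complex.normSq (M j i) := by
    have := htrace.symm.trans htrace2
    exact_mod_cast this
  have hsum_le : ∑ i, lam i ≤ (k:ℝ) * (k:ℝ) := by
    rw [hsumlam]
    calc ∑ i, ∑ j, Complex.normSq (M j i) ≤ ∑ i : ι, ∑ j : ι, (1:ℝ) := by
          refine Finset.sum_le_sum fun i _ => Finset.sum_le_sum fun j _ => ?_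
          rw [← Complex.sq_norm]
          nlinarith [hM j i, norm_nonneg (M j i)]
      _ = (k:ℝ) * (k:ℝ) := by simp [Finset.card_univ, ← hkdef]
  -- det G = normSq (det M) = prod eigenvalues
  have hdetG : ((Complex.normSq M.det : ℝ) : ℂ) = ∏ i, (lam i : ℂ) := by
    rw [show ∏ i, ((lam i : ℝ) : ℂ) = G.det from hH.det_eq_prod_eigenvalues.symm, hGdef,
      Matrix.det_mul, Matrix.det_conjTranspose, Complex.star_def,
      ← Complex.normSq_eq_conj_mul_self]
  have hdetG' : Complex.normSq M.det = ∏ i, lam i := by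
    have : ((Complex.normSq M.det : ℝ) : ℂ) = ((∏ i, lam i : ℝ) : ℂ) := by
      rw [hdetG]; push_cast; ring
    exact_mod_cast this
  have hbound : Complex.normSq M.det ≤ (k:ℝ) ^ k := by
    rw [hdetG']
    calc ∏ i, lam i ≤ ((∑ i, lam i) / (k:ℝ)) ^ k := amgm lam hl0 hk.ne'
      _ ≤ (k:ℝ) ^ k := by
          refine pow_le_pow_left₀ (div_nonneg (Finset.sum_nonneg fun i _ => hl0 i) hkR.le) ?_ k
          rw [div_le_iff₀ hkR]
          exact hsum_le
  -- conclude
  rw [Complex.norm_def]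
  calc Real.sqrt (Complex.normSq M.det) ≤ Real.sqrt ((k:ℝ)^k) := Real.sqrt_le_sqrt hbound
    _ = (k:ℝ) ^ ((k:ℝ)/2) := by
        rw [Real.sqrt_eq_rpow, ← Real.rpow_natCast (k:ℝ) k, ← Real.rpow_mul (le_of_lt hkR)]
        rw [mul_one_div]

lemma hadamard_row {ι : Type*} [Fintype ι] [DecidableEq ι] (M : Matrix ι ι ℂ) (c : ι → ℝ)
    (hc : ∀ i, 0 ≤ c i) (hM : ∀ i j, ‖M i j‖ ≤ c i) :
    ‖M.det‖ ≤ (Fintype.card ι : ℝ) ^ ((Fintype.card ι : ℝ) / 2) * ∏ i, c i := by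
  by_cases hz : ∀ i, 0 < c i
  · set M' : Matrix ι ι ℂ := Matrix.of fun i j => M i j / (c i : ℂ) with hM'def
    have hM' : ∀ i j, ‖M' i j‖ ≤ 1 := by
      intro i j
      rw [hM'def, Matrix.of_apply, norm_div, Complex.norm_real, Real.norm_eq_abs, abs_of_nonneg (hc i)]
      exact div_le_one_of_le₀ (hM i j) (hc i)
    have hMeq : M = Matrix.of fun i j => (c i : ℂ) * M' i j := by
      ext i j
      rw [Matrix.of_apply, hM'def, Matrix.of_apply]
      have : ((c i : ℝ) : ℂ) ≠ 0 := by
        exact_mod_cast (Complex.ofReal_ne_zero.mpr (hz i).ne')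
      field_simp
    rw [hMeq, Matrix.det_mul_column, norm_mul]
    have habs : ‖∏ i, ((c i : ℝ) : ℂ)‖ = ∏ i, c i := by
      rw [norm_prod]
      exact Finset.prod_congr rfl fun i _ => by
        rw [Complex.norm_real, Real.norm_eq_abs, abs_of_nonneg (hc i)]
    rw [habs, mul_comm]
    exact mul_le_mul_of_nonneg_right (hadamard_one M' hM')
      (Finset.prod_nonneg fun i _ => hc i)
  · push_neg at hz
    obtain ⟨i, hi⟩ := hz
    have hci : c i = 0 := le_antisymm hi (hc i)
    have hrow : ∀ j, M i j = 0 := by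
      intro j
      have := hM i j
      rw [hci] at this
      exact norm_eq_zero.mp (le_antisymm this (norm_nonneg _))
    rw [Matrix.det_eq_zero_of_row_eq_zero i hrow, norm_zero]
    have : ∏ j, c j = 0 := Finset.prod_eq_zero (Finset.mem_univ i) hci
    rw [this, mul_zero]

lemma det_piecewise_eq {m : Type*} [Fintype m] [DecidableEq m] (B : Matrix m m ℂ) (s : Finset m) :
    Matrix.det (Matrix.of (s.piecewise B (1 : Matrix m m ℂ)))
      = Matrix.det (Matrix.of fun (i j : {x // x ∈ s}) => B i j) := by
  classical
  let e : {x // x ∈ s} ⊕ {x // x ∉ s} ≃ m := Equiv.sumCompl (· ∈ s)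
  rw [← Matrix.det_submatrix_equiv_self e]
  have hsub : (Matrix.of (s.piecewise B (1 : Matrix m m ℂ))).submatrix e e
      = Matrix.fromBlocks (Matrix.of fun (i j : {x // x ∈ s}) => B i j)
          (Matrix.of fun (i : {x // x ∈ s}) (j : {x // x ∉ s}) => B i j)
          0 (1 : Matrix {x // x ∉ s} {x // x ∉ s} ℂ) := by
    ext i j
    cases i with
    | inl i =>
      cases j with
      | inl j =>
        simp [e, Matrix.submatrix_apply, Finset.piecewise, i.2]
      | inr j =>
        simp [e, Matrix.submatrix_apply, Finset.piecewise, i.2]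
    | inr i =>
      cases j with
      | inl j =>
        have hne : (i : m) ≠ (j : m) := by
          intro h
          exact i.2 (h ▸ j.2)
        simp [e, Matrix.submatrix_apply, Finset.piecewise, i.2,
          Matrix.one_apply_ne hne]
      | inr j =>
        simp [e, Matrix.submatrix_apply, Finset.piecewise, i.2,
          Matrix.one_apply, Subtype.val_inj]
  rw [hsub, Matrix.det_fromBlocks_zero₂₁, Matrix.det_one, mul_one]

lemma det_piecewise_bound {m : Type*} [Fintype m] [DecidableEq m] (B : Matrix m m ℂ)
    (c : m → ℝ) (hc : ∀ i, 0 ≤ c i) (hB : ∀ i j, ‖B i j‖ ≤ c i) (s : Finset m) :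
    ‖Matrix.det (Matrix.of (s.piecewise B (1 : Matrix m m ℂ)))‖
      ≤ (s.card : ℝ) ^ ((s.card : ℝ) / 2) * ∏ i ∈ s, c i := by
  classical
  rw [det_piecewise_eq]
  have := hadamard_row (Matrix.of fun (i j : {x // x ∈ s}) => B i j) (fun i => c i)
    (fun i => hc i) (fun i j => hB i j)
  rwa [Fintype.card_coe, Finset.prod_coe_sort] at this

lemma coeffExpand {R : Type*} [CommRing R] {m : Type*} [Fintype m] [DecidableEq m]
    (B : Matrix m m R) (k : ℕ) :
    (Matrix.det ((1 : Matrix m m R[X]) + (X : R[X]) • B.map C)).coeff k =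
      ∑ s : Finset m, if s.card = k
        then Matrix.det (Matrix.of (s.piecewise B (1 : Matrix m m R))) else 0 := by
  rw [detExpand, Polynomial.finset_sum_coeff]
  refine Finset.sum_congr rfl fun s _ => ?_
  rw [mul_comm, Polynomial.C_mul_X_pow_eq_monomial, Polynomial.coeff_monomial]

-- RHS polynomial as a determinant
lemma rhsPoly {n : ℕ} (μ : Fin n → ℝ) :
    (∏ i, (1 + Polynomial.C (μ i) * Polynomial.X) ^ 2 : Polynomial ℝ) =
      Matrix.det ((1 : Matrix (Fin n ⊕ Fin n) (Fin n ⊕ Fin n) ℝ[X]) +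
        (X : ℝ[X]) • ((Matrix.diagonal (Sum.elim μ μ)).map C)) := by
  have hmat : ((1 : Matrix (Fin n ⊕ Fin n) (Fin n ⊕ Fin n) ℝ[X]) +
      (X : ℝ[X]) • ((Matrix.diagonal (Sum.elim μ μ)).map C)) =
      Matrix.diagonal (fun j => 1 + X * C (Sum.elim μ μ j)) := by
    ext i j
    by_cases h : i = j
    · subst h
      simp [Matrix.diagonal_apply_eq, Matrix.one_apply_eq, Matrix.map_apply]
    · simp [Matrix.diagonal_apply_ne _ h, Matrix.one_apply_ne h, Matrix.map_apply]
  rw [hmat, Matrix.det_diagonal, Fintype.prod_sum_type]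
  simp only [Sum.elim_inl, Sum.elim_inr]
  rw [← Finset.prod_mul_distrib]
  exact Finset.prod_congr rfl fun i _ => by ring

lemma rhsDet {n : ℕ} (μ : Fin n → ℝ) (s : Finset (Fin n ⊕ Fin n)) :
    Matrix.det (Matrix.of (s.piecewise (Matrix.diagonal (Sum.elim μ μ))
        (1 : Matrix (Fin n ⊕ Fin n) (Fin n ⊕ Fin n) ℝ)))
      = ∏ i ∈ s, Sum.elim μ μ i := by
  have h : Matrix.of (s.piecewise (Matrix.diagonal (Sum.elim μ μ))
      (1 : Matrix (Fin n ⊕ Fin n) (Fin n ⊕ Fin n) ℝ))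
      = Matrix.diagonal (fun i => if i ∈ s then Sum.elim μ μ i else 1) := by
    ext i j
    by_cases hi : i ∈ s
    · simp only [Matrix.of_apply, Finset.piecewise, hi, ↓reduceIte]
      by_cases h : i = j
      · subst h; simp [Matrix.diagonal_apply_eq, hi]
      · simp [Matrix.diagonal_apply_ne _ h]
    · simp only [Matrix.of_apply, Finset.piecewise, hi, ↓reduceIte]
      by_cases h : i = j
      · subst h; simp [Matrix.diagonal_apply_eq, hi]
      · simp [Matrix.diagonal_apply_ne _ h, Matrix.one_apply_ne h]
  rw [h, Matrix.det_diagonal]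
  rw [show (∏ i, if i ∈ s then Sum.elim μ μ i else 1) = ∏ i ∈ univ ∩ s, Sum.elim μ μ i from
    Finset.prod_ite_mem univ s _]
  rw [Finset.univ_inter]

lemma norm_q (q : Quaternion ℝ) : ‖q‖ = Real.sqrt (Quaternion.normSq q) := by
  rw [Quaternion.normSq_eq_norm_mul_self, Real.sqrt_mul_self (norm_nonneg q)]

lemma qC1_bound (q : Quaternion ℝ) : ‖qC1 q‖ ≤ ‖q‖ := by
  rw [Complex.norm_def, norm_q q]
  refine Real.sqrt_le_sqrt ?_
  rw [qC1, Complex.normSq_mk, Quaternion.normSq_def']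
  nlinarith [sq_nonneg q.imJ, sq_nonneg q.imK]

lemma qC2_bound (q : Quaternion ℝ) : ‖qC2 q‖ ≤ ‖q‖ := by
  rw [Complex.norm_def, norm_q q]
  refine Real.sqrt_le_sqrt ?_
  rw [qC2, Complex.normSq_mk, Quaternion.normSq_def']
  nlinarith [sq_nonneg q.re, sq_nonneg q.imI]


lemma companion_entry_bound {n : ℕ} (μ : Fin n → ℝ) (hμ : ∀ k, 0 ≤ μ k)
    (D : Matrix (Fin n) (Fin n) (Quaternion ℝ)) (hD : ∀ k ℓ, ‖D k ℓ‖ ≤ 1)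
    (A : Matrix (Fin n) (Fin n) (Quaternion ℝ))
    (hA : ∀ k ℓ, A k ℓ = ((μ k : ℝ) : Quaternion ℝ) * D k ℓ) :
    ∀ i j, ‖companion A i j‖ ≤ Sum.elim μ μ i := by
  have hnorm : ∀ a b, ‖A a b‖ ≤ μ a := by
    intro a b
    rw [hA, norm_mul, Quaternion.norm_coe, Real.norm_eq_abs, abs_of_nonneg (hμ a)]
    calc μ a * ‖D a b‖ ≤ μ a * 1 := mul_le_mul_of_nonneg_left (hD a b) (hμ a)
      _ = μ a := mul_one _
  rintro (a | a) (b | b)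
  · rw [companion, Matrix.fromBlocks_apply₁₁, Matrix.map_apply, Sum.elim_inl]
    exact (qC1_bound _).trans (hnorm a b)
  · rw [companion, Matrix.fromBlocks_apply₁₂, Matrix.map_apply, Sum.elim_inl]
    exact (qC2_bound _).trans (hnorm a b)
  · rw [companion, Matrix.fromBlocks_apply₂₁, Sum.elim_inr, Matrix.neg_apply,
      Matrix.map_apply, norm_neg, Complex.norm_conj]
    exact (qC2_bound _).trans (hnorm a b)
  · rw [companion, Matrix.fromBlocks_apply₂₂, Sum.elim_inr, Matrix.map_apply, Complex.norm_conj]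
    exact (qC1_bound _).trans (hnorm a b)

/-- If `A = (μ_k d_{kℓ})` with `μ_k ≥ 0` and `|d_{kℓ}| ≤ 1`, then for every `k ≤ 2n` the
coefficient of `z^k` in `det(I_{2n} + z χ_A)` is bounded in absolute value by
`2^k k^{k/2}` times the coefficient of `z^k` in `∏ᵢ (1 + μᵢ z)²`. -/
theorem coeff_det_companion_bound {n : ℕ} (μ : Fin n → ℝ) (hμ : ∀ k, 0 ≤ μ k)
    (D : Matrix (Fin n) (Fin n) (Quaternion ℝ)) (hD : ∀ k ℓ, ‖D k ℓ‖ ≤ 1)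
    (A : Matrix (Fin n) (Fin n) (Quaternion ℝ))
    (hA : ∀ k ℓ, A k ℓ = ((μ k : ℝ) : Quaternion ℝ) * D k ℓ) :
    ∀ k : ℕ, k ≤ 2 * n →
      ‖(detPolyAdd (companion A)).coeff k‖ ≤
        2 ^ k * (k : ℝ) ^ ((k : ℝ) / 2) *
          ((∏ i, (1 + Polynomial.C (μ i) * Polynomial.X) ^ 2 : Polynomial ℝ)).coeff k := by
  intro k _
  have hcc : ∀ i : Fin n ⊕ Fin n, 0 ≤ Sum.elim μ μ i := by rintro (a | a) <;> exact hμ a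
  have hent := companion_entry_bound μ hμ D hD A hA
  have hL : (detPolyAdd (companion A)).coeff k =
      ∑ s : Finset (Fin n ⊕ Fin n), if s.card = k
        then Matrix.det (Matrix.of (s.piecewise (companion A)
          (1 : Matrix (Fin n ⊕ Fin n) (Fin n ⊕ Fin n) ℂ))) else 0 := by
    rw [detPolyAdd]; exact coeffExpand _ k
  have hR : ((∏ i, (1 + Polynomial.C (μ i) * Polynomial.X) ^ 2 : Polynomial ℝ)).coeff k =
      ∑ s : Finset (Fin n ⊕ Fin n), if s.card = k then ∏ i ∈ s, Sum.elim μ μ i else 0 := by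
    rw [rhsPoly, coeffExpand]
    refine Finset.sum_congr rfl fun s _ => ?_
    by_cases h : s.card = k
    · rw [if_pos h, if_pos h, rhsDet]
    · rw [if_neg h, if_neg h]
  have hsum_nonneg : (0:ℝ) ≤ ∑ s : Finset (Fin n ⊕ Fin n),
      if s.card = k then ∏ i ∈ s, Sum.elim μ μ i else 0 := by
    refine Finset.sum_nonneg fun s _ => ?_
    by_cases h : s.card = k
    · rw [if_pos h]; exact Finset.prod_nonneg fun i _ => hcc i
    · rw [if_neg h]
  have hrpow_nonneg : (0:ℝ) ≤ (k : ℝ) ^ ((k : ℝ) / 2) :=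
    Real.rpow_nonneg (Nat.cast_nonneg k) _
  calc ‖(detPolyAdd (companion A)).coeff k‖
      ≤ ∑ s : Finset (Fin n ⊕ Fin n), ‖(if s.card = k
          then Matrix.det (Matrix.of (s.piecewise (companion A)
            (1 : Matrix (Fin n ⊕ Fin n) (Fin n ⊕ Fin n) ℂ))) else 0)‖ := by
        rw [hL]; exact norm_sum_le _ _
    _ ≤ ∑ s : Finset (Fin n ⊕ Fin n), if s.card = k
          then (k : ℝ) ^ ((k : ℝ) / 2) * ∏ i ∈ s, Sum.elim μ μ i else 0 := by
        refine Finset.sum_le_sum fun s _ => ?_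
        by_cases h : s.card = k
        · rw [if_pos h, if_pos h]
          have hbd := det_piecewise_bound (companion A) (Sum.elim μ μ) hcc hent s
          rw [h] at hbd
          exact hbd
        · rw [if_neg h, if_neg h, norm_zero]
    _ = (k : ℝ) ^ ((k : ℝ) / 2) * ∑ s : Finset (Fin n ⊕ Fin n),
          if s.card = k then ∏ i ∈ s, Sum.elim μ μ i else 0 := by
        rw [Finset.mul_sum]
        exact Finset.sum_congr rfl fun s _ => by rw [mul_ite, mul_zero]
    _ ≤ 2 ^ k * ((k : ℝ) ^ ((k : ℝ) / 2) * ∑ s : Finset (Fin n ⊕ Fin n),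
          if s.card = k then ∏ i ∈ s, Sum.elim μ μ i else 0) := by
        refine le_mul_of_one_le_left (mul_nonneg hrpow_nonneg hsum_nonneg) ?_
        exact one_le_pow₀ one_le_two
    _ = 2 ^ k * (k : ℝ) ^ ((k : ℝ) / 2) *
          ((∏ i, (1 + Polynomial.C (μ i) * Polynomial.X) ^ 2 : Polynomial ℝ)).coeff k := by
        rw [hR, mul_assoc]
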